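/- Let F = (f, g, h) be a GSWF on three alternatives with n voters satisfying the IIA condition. Then D_1(F) ≤ E[f] + (1 − E[h]). (Indeed, the GSWF G with choice functions G_{12} = 0, G_{23} = g, G_{31} = 1 always ranks alternative 1 at the bottom, hence lies in F_3(n), and Pr[F ≠ G] ≤ E[f] + (1 − E[h]).) -/

import Mathlib

open Finset

noncomputable section

/-- The discrete cube `{0,1}^n`. -/
abbrev Cube (n : ℕ) := Fin n → Bool

/-- Inner product of real-valued functions on the cube w.r.t. the uniform measure. -/
def cInner (n : ℕ) (f g : Cube n → ℝ) : ℝ :=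
  (∑ x : Cube n, f x * g x) / 2 ^ n

/-- Expectation w.r.t. the uniform measure on the cube. -/
def cExp (n : ℕ) (f : Cube n → ℝ) : ℝ :=
  (∑ x : Cube n, f x) / 2 ^ n

/-- The Walsh character `r_S`. -/
def walsh (n : ℕ) (S : Finset (Fin n)) : Cube n → ℝ :=
  fun x => ∏ i ∈ S, (2 * (if x i then (1 : ℝ) else 0) - 1)

/-- Fourier–Walsh coefficient of `f` at `S`. -/
def fcoef (n : ℕ) (f : Cube n → ℝ) (S : Finset (Fin n)) : ℝ :=
  cInner n f (walsh n S)

/-- Real-valued version of a Boolean function. -/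
def BR (n : ℕ) (f : Cube n → Bool) : Cube n → ℝ :=
  fun x => if f x then 1 else 0

/-- A triple `(x,y,z)` of preference vectors comes from a profile of linear orders
on three alternatives iff no coordinate is cyclic, i.e. `¬(x k = y k = z k)` for all `k`. -/
def Profile3Ok (n : ℕ) (x y z : Cube n) : Prop :=
  ∀ k, ¬ (x k = y k ∧ y k = z k)

/-- Probability of a non-transitive outcome for the IIA GSWF on three alternatives
given by pairwise choice functions `f, g, h`, for a uniformly random profile. -/
def PF3 (n : ℕ) (f g h : Cube n → Bool) : ℝ :=
  (Nat.card {p : Cube n × Cube n × Cube n //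
      Profile3Ok n p.1 p.2.1 p.2.2 ∧ f p.1 = g p.2.1 ∧ g p.2.1 = h p.2.2} : ℝ) / 6 ^ n

/-- The outcome of the GSWF `(f,g,h)` is transitive on every profile
(membership in `F_3(n)`). -/
def AlwaysTransitive3 (n : ℕ) (f g h : Cube n → Bool) : Prop :=
  ∀ x y z : Cube n, Profile3Ok n x y z → ¬ (f x = g y ∧ g y = h z)

/-- `Pr[F ≠ G]`: the probability, over a uniform profile, that the triple of pairwise
outcomes of `(f,g,h)` differs from that of `(f',g',h')`. -/
def dist3 (n : ℕ) (f g h f' g' h' : Cube n → Bool) : ℝ :=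
  (Nat.card {p : Cube n × Cube n × Cube n //
      Profile3Ok n p.1 p.2.1 p.2.2 ∧
      ¬ (f p.1 = f' p.1 ∧ g p.2.1 = g' p.2.1 ∧ h p.2.2 = h' p.2.2)} : ℝ) / 6 ^ n

/-- `D_1(F) = min_{G ∈ F_3(n)} Pr[F ≠ G]`. -/
def D1_3 (n : ℕ) (f g h : Cube n → Bool) : ℝ :=
  sInf { r : ℝ | ∃ f' g' h' : Cube n → Bool,
    AlwaysTransitive3 n f' g' h' ∧ r = dist3 n f g h f' g' h' }


/-- Auxiliary: each coordinate-wise constraint excluding one pair leaves 3 choices. -/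
lemma card3_left (b : Bool) :
    Fintype.card {bc : Bool × Bool // ¬ (b = bc.1 ∧ bc.1 = bc.2)} = 3 := by
  cases b <;> decide

lemma card3_right (b : Bool) :
    Fintype.card {bc : Bool × Bool // ¬ (bc.1 = bc.2 ∧ bc.2 = b)} = 3 := by
  cases b <;> decide

lemma card_pair_fiber (n : ℕ) (p : Fin n → Bool × Bool → Prop) [∀ k, DecidablePred (p k)]
    (hp : ∀ k, Fintype.card {bc : Bool × Bool // p k bc} = 3) :
    (univ.filter (fun yz : Cube n × Cube n => ∀ k, p k (yz.1 k, yz.2 k))).card = 3 ^ n := by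
  classical
  rw [← Fintype.card_subtype]
  have e : {yz : Cube n × Cube n // ∀ k, p k (yz.1 k, yz.2 k)} ≃ ∀ k, {bc : Bool × Bool // p k bc} :=
    ((Equiv.arrowProdEquivProdArrow (Fin n) (fun _ => Bool) (fun _ => Bool)).symm.subtypeEquiv
      (fun yz => Iff.rfl)).trans (Equiv.subtypePiEquivPi)
  rw [Fintype.card_congr e, Fintype.card_pi]
  simp [hp]

lemma count_first_general (n : ℕ) (p : Cube n → Fin n → Bool × Bool → Prop)
    [∀ x k, DecidablePred (p x k)]
    (hp : ∀ x k, Fintype.card {bc : Bool × Bool // p x k bc} = 3)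
    (s : Cube n → Prop) [DecidablePred s] :
    (univ.filter (fun q : Cube n × Cube n × Cube n =>
        (∀ k, p q.1 k (q.2.1 k, q.2.2 k)) ∧ s q.1)).card
      = 3 ^ n * (univ.filter s).card := by
  classical
  rw [Finset.card_filter, Fintype.sum_prod_type]
  have key : ∀ x : Cube n,
      (∑ q : Cube n × Cube n, if (∀ k, p x k (q.1 k, q.2 k)) ∧ s x then 1 else 0)
        = if s x then 3 ^ n else 0 := by
    intro x
    by_cases hx : s x
    · simp only [hx, and_true, if_true]
      rw [← Finset.card_filter]
      exact card_pair_fiber n (p x) (hp x)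
    · simp [hx]
  rw [Finset.sum_congr rfl (fun x _ => key x), ← Finset.sum_filter, Finset.sum_const,
    smul_eq_mul, mul_comm]

open Classical in
lemma count_first (n : ℕ) (f : Cube n → Bool) (b : Bool) :
    (univ.filter (fun q : Cube n × Cube n × Cube n =>
        Profile3Ok n q.1 q.2.1 q.2.2 ∧ f q.1 = b)).card
      = 3 ^ n * (univ.filter (fun x : Cube n => f x = b)).card := by
  classical
  have := count_first_general n (fun x k bc => ¬ (x k = bc.1 ∧ bc.1 = bc.2))
    (fun x k => card3_left (x k)) (fun x => f x = b)
  rw [← this]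
  apply Finset.card_bij (fun q _ => q) <;> simp [Profile3Ok]

open Classical in
lemma count_third (n : ℕ) (h : Cube n → Bool) (b : Bool) :
    (univ.filter (fun q : Cube n × Cube n × Cube n =>
        Profile3Ok n q.1 q.2.1 q.2.2 ∧ h q.2.2 = b)).card
      = 3 ^ n * (univ.filter (fun z : Cube n => h z = b)).card := by
  classical
  have key := count_first_general n (fun z k bc => ¬ (bc.1 = bc.2 ∧ bc.2 = z k))
    (fun z k => card3_right (z k)) (fun z => h z = b)
  rw [← key, ← Fintype.card_subtype, ← Fintype.card_subtype]
  apply Fintype.card_congr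
  exact {
    toFun := fun q => ⟨(q.1.2.2, q.1.1, q.1.2.1), by
      obtain ⟨hOk, hb⟩ := q.2
      exact ⟨fun k => hOk k, hb⟩⟩
    invFun := fun q => ⟨(q.1.2.1, q.1.2.2, q.1.1), by
      obtain ⟨hOk, hb⟩ := q.2
      exact ⟨fun k => hOk k, hb⟩⟩
    left_inv := fun q => rfl
    right_inv := fun q => rfl }

/-- For any IIA GSWF `(f,g,h)` on three alternatives, `D₁(F) ≤ E[f] + (1 − E[h])`. -/
theorem D1_le_of_choice_expectations (n : ℕ) (f g h : Cube n → Bool) :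
    D1_3 n f g h ≤ cExp n (BR n f) + (1 - cExp n (BR n h)) := by
  classical
  set f' : Cube n → Bool := fun _ => false with hf'
  set h' : Cube n → Bool := fun _ => true with hh'
  have htrans : AlwaysTransitive3 n f' g h' := by
    intro x y z _ hc
    have h1 : (false : Bool) = g y := hc.1
    have h2 : g y = true := hc.2
    rw [← h1] at h2
    exact Bool.false_ne_true h2
  have hmem : dist3 n f g h f' g h' ∈
      { r : ℝ | ∃ f'' g'' h'' : Cube n → Bool,
        AlwaysTransitive3 n f'' g'' h'' ∧ r = dist3 n f g h f'' g'' h'' } :=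
    ⟨f', g, h', htrans, rfl⟩
  have hbdd : BddBelow { r : ℝ | ∃ f'' g'' h'' : Cube n → Bool,
      AlwaysTransitive3 n f'' g'' h'' ∧ r = dist3 n f g h f'' g'' h'' } := by
    refine ⟨0, fun r hr => ?_⟩
    obtain ⟨f'', g'', h'', _, rfl⟩ := hr
    unfold dist3
    positivity
  refine le_trans (csInf_le hbdd hmem) ?_
  -- Now bound dist3
  unfold dist3
  -- convert the Nat.card to a Finset card
  have hcard : (Nat.card {p : Cube n × Cube n × Cube n //
      Profile3Ok n p.1 p.2.1 p.2.2 ∧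
      ¬ (f p.1 = f' p.1 ∧ g p.2.1 = g p.2.1 ∧ h p.2.2 = h' p.2.2)})
      = (univ.filter (fun p : Cube n × Cube n × Cube n =>
          Profile3Ok n p.1 p.2.1 p.2.2 ∧
          ¬ (f p.1 = f' p.1 ∧ g p.2.1 = g p.2.1 ∧ h p.2.2 = h' p.2.2))).card := by
    rw [Nat.card_eq_fintype_card, Fintype.card_subtype]
  rw [hcard]
  -- union bound
  set A := univ.filter (fun p : Cube n × Cube n × Cube n =>
      Profile3Ok n p.1 p.2.1 p.2.2 ∧ f p.1 = true) with hA
  set B := univ.filter (fun p : Cube n × Cube n × Cube n =>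
      Profile3Ok n p.1 p.2.1 p.2.2 ∧ h p.2.2 = false) with hB
  have hsub : (univ.filter (fun p : Cube n × Cube n × Cube n =>
          Profile3Ok n p.1 p.2.1 p.2.2 ∧
          ¬ (f p.1 = f' p.1 ∧ g p.2.1 = g p.2.1 ∧ h p.2.2 = h' p.2.2))) ⊆ A ∪ B := by
    intro p hp
    simp only [mem_filter, mem_univ, true_and] at hp
    obtain ⟨hok, hne⟩ := hp
    by_cases hfp : f p.1 = true
    · apply mem_union_left
      simp only [hA, mem_filter, mem_univ, true_and]
      exact ⟨hok, hfp⟩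
    · apply mem_union_right
      simp only [hB, mem_filter, mem_univ, true_and]
      refine ⟨hok, ?_⟩
      by_contra hhp
      apply hne
      constructor
      · simpa [hf'] using hfp
      · simpa [hh'] using hhp
  have hle : (univ.filter (fun p : Cube n × Cube n × Cube n =>
          Profile3Ok n p.1 p.2.1 p.2.2 ∧
          ¬ (f p.1 = f' p.1 ∧ g p.2.1 = g p.2.1 ∧ h p.2.2 = h' p.2.2))).card
        ≤ A.card + B.card :=
    le_trans (Finset.card_le_card hsub) (Finset.card_union_le A B)
  have hAcard : A.card = 3 ^ n * (univ.filter (fun x : Cube n => f x = true)).card :=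
    count_first n f true
  have hBcard : B.card = 3 ^ n * (univ.filter (fun z : Cube n => h z = false)).card :=
    count_third n h false
  set a : ℕ := (univ.filter (fun x : Cube n => f x = true)).card with ha
  set c : ℕ := (univ.filter (fun z : Cube n => h z = false)).card with hc
  -- Expectations
  have hEf : cExp n (BR n f) = (a : ℝ) / 2 ^ n := by
    unfold cExp BR
    congr 1
    rw [ha]
    push_cast [← Finset.sum_boole]
    exact Finset.sum_congr rfl (fun x _ => by by_cases hx : f x <;> simp [hx])
  have hEh : 1 - cExp n (BR n h) = (c : ℝ) / 2 ^ n := by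
    have h2 : (0:ℝ) < 2 ^ n := by positivity
    have hhc : cExp n (BR n h)
        = ((univ.filter (fun z : Cube n => h z = true)).card : ℝ) / 2 ^ n := by
      unfold cExp BR
      congr 1
      push_cast [← Finset.sum_boole]
      exact Finset.sum_congr rfl (fun x _ => by by_cases hx : h x <;> simp [hx])
    have hsplit : (univ.filter (fun z : Cube n => h z = true)).card + c = 2 ^ n := by
      rw [hc]
      have := Finset.card_filter_add_card_filter_not
        (s := (univ : Finset (Cube n))) (p := fun z => h z = true)
      simpa [Bool.not_eq_true, Fintype.card_fun] using this
    have hs' : ((univ.filter (fun z : Cube n => h z = true)).card : ℝ) + c = 2 ^ n := by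
      exact_mod_cast hsplit
    rw [hhc]
    field_simp
    linarith
  rw [hEf, hEh, ← add_div]
  -- final arithmetic
  have h6 : (6:ℝ) ^ n = 3 ^ n * 2 ^ n := by
    rw [← mul_pow]; norm_num
  rw [div_le_div_iff₀ (by positivity) (by positivity), h6]
  calc ((univ.filter (fun p : Cube n × Cube n × Cube n =>
          Profile3Ok n p.1 p.2.1 p.2.2 ∧
          ¬ (f p.1 = f' p.1 ∧ g p.2.1 = g p.2.1 ∧ h p.2.2 = h' p.2.2))).card : ℝ) * 2 ^ n
      ≤ ((A.card + B.card : ℕ) : ℝ) * 2 ^ n := by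
        apply mul_le_mul_of_nonneg_right _ (by positivity)
        exact_mod_cast hle
    _ = ((a : ℝ) + c) * (3 ^ n * 2 ^ n) := by
        push_cast [hAcard, hBcard]
        ring


end
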